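/- Fix q ≥ 1 and a compact set K ⊂ ℝ^{n+1}. For 0 < t with K ⊂ S(t) = ℝ^n × (-t,t), write G_t = G_∞ + H_t where G_∞(x̂,ŷ) = |x̂-ŷ|^{-q}. Then H_t(x̂,ŷ) is bounded uniformly for x̂, ŷ ∈ K, and H_t → 0 uniformly on K × K as t → ∞; consequently the strip energies satisfy: E_K(t₁) < ∞ if and only if E_K(t₂) < ∞ for any t₁, t₂ ∈ (t₀, ∞], and E_K(t) → V_q(K) as t → ∞, where E_K(t) = min over probability measures μ on K of ∬ G_t dμ dμ and V_q(K) = min of ∬ |x̂-ŷ|^{-q} dμ dμ. -/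

import Mathlib

open Real MeasureTheory Filter Topology Classical

/-- Points of the strip `S(t) ⊂ ℝⁿ × ℝ`. -/
abbrev StripPt (n : ℕ) := EuclideanSpace ℝ (Fin n) × ℝ

/-- Squared distance from `x̂` to the `j`-th reflected copy `ρ_j(ŷ) = (y, 2tj + (-1)^j w)`. -/
noncomputable def reflSq (n : ℕ) (t : ℝ) (j : ℤ) (p p' : StripPt n) : ℝ :=
  ‖p.1 - p'.1‖ ^ 2 + (p.2 - (2 * t * j + (-1 : ℝ) ^ j * p'.2)) ^ 2

/-- The whole-space Riesz kernel `G_∞(x̂,ŷ) = |x̂ - ŷ|^{-q}`. -/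
noncomputable def GinfK (n : ℕ) (q : ℝ) (p p' : StripPt n) : ℝ :=
  (‖p.1 - p'.1‖ ^ 2 + (p.2 - p'.2) ^ 2) ^ (-q / 2)

/-- The remainder `H_t = G_t − G_∞` of the strip kernel: for `q > 1` the sum of the reflected
Riesz terms over `j ≠ 0`, and for `q = 1` its renormalized version. -/
noncomputable def HK (n : ℕ) (q t : ℝ) (p p' : StripPt n) : ℝ :=
  if 1 < q then ∑' j : {j : ℤ // j ≠ 0}, (reflSq n t j p p') ^ (-q / 2)
  else (∑' j : {j : ℤ // j ≠ 0},
          ((reflSq n t j p p') ^ (-(1 : ℝ) / 2) - (2 * t * |(j : ℤ)|)⁻¹)) +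
        (Real.eulerMascheroniConstant - Real.log (4 * t)) / t

/-- The strip kernel `G_t = G_∞ + H_t`. -/
noncomputable def GK (n : ℕ) (q t : ℝ) (p p' : StripPt n) : ℝ :=
  GinfK n q p p' + HK n q t p p'

/-- The energy of a probability measure `μ` with respect to a kernel `k`, valued in `EReal`:
it is the double integral when the diagonal is `μ×μ`-null and the kernel is integrable, and
`+∞` otherwise. -/

noncomputable def measEnergy (n : ℕ) (k : StripPt n → StripPt n → ℝ)
    (μ : Measure (StripPt n)) : EReal :=
  if (μ.prod μ) {p : StripPt n × StripPt n | p.1 = p.2} = 0 ∧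
      Integrable (fun p : StripPt n × StripPt n => k p.1 p.2) (μ.prod μ)
  then ((∫ p : StripPt n × StripPt n, k p.1 p.2 ∂(μ.prod μ) : ℝ) : EReal)
  else ⊤

/-- The energy of a set `K` with respect to a kernel `k`: the infimum of `measEnergy` over
probability measures supported in `K`. -/
noncomputable def setEnergy (n : ℕ) (k : StripPt n → StripPt n → ℝ)
    (K : Set (StripPt n)) : EReal :=
  ⨅ (μ : Measure (StripPt n)) (_ : IsProbabilityMeasure μ) (_ : μ Kᶜ = 0),
    measEnergy n k μ

/-! ### Auxiliary lemmas -/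

lemma rpow_half_anti {r a : ℝ} (q : ℝ) (hq : 0 ≤ q) (ha : 0 < a) (h : a^2 ≤ r) :
    r ^ (-q/2) ≤ a ^ (-q) := by
  have h1 : r ^ (-q/2) ≤ (a^2) ^ (-q/2) :=
    Real.rpow_le_rpow_of_nonpos (by positivity) h (by linarith)
  have h2 : ((a^2 : ℝ)) ^ (-q/2) = a ^ (-q) := by
    rw [← Real.rpow_natCast a 2, ← Real.rpow_mul ha.le]
    norm_num
    rw [show (2:ℝ) * (-q / 2) = -q by ring]
  linarith

lemma rpow_half_anti' {r u : ℝ} (q : ℝ) (hq : 0 ≤ q) (hu : 0 < u) (hr : 0 < r) (h : r ≤ u^2) :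
    u ^ (-q) ≤ r ^ (-q/2) := by
  have h2 : ((u^2 : ℝ)) ^ (-q/2) = u ^ (-q) := by
    rw [← Real.rpow_natCast u 2, ← Real.rpow_mul hu.le]
    norm_num
    rw [show (2:ℝ) * (-q / 2) = -q by ring]
  rw [← h2]
  exact Real.rpow_le_rpow_of_nonpos hr h (by linarith)

lemma qgt_term_bound {r t M c J q : ℝ} (ht : 0 < t) (hM : 0 ≤ M) (hc : 0 < c) (hJ : 1 ≤ J)
    (hct : c*t ≤ t - M) (hq : 0 ≤ q)
    (hl : (2*t*J - 2*M)^2 ≤ r) :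
    r ^ (-q/2) ≤ (2*c*t) ^ (-q) * J ^ (-q) := by
  have ha : (0:ℝ) < 2*c*t*J := by positivity
  have key : (2*c*t*J)^2 ≤ r := by
    have h1 : 2*c*t*J ≤ 2*t*J - 2*M := by nlinarith
    nlinarith
  calc r ^ (-q/2) ≤ (2*c*t*J) ^ (-q) := rpow_half_anti q hq ha key
  _ = (2*c*t) ^ (-q) * J ^ (-q) := Real.mul_rpow (by positivity) (by linarith)

lemma q1_term_bound {r t M D c J : ℝ} (ht : 0 < t) (hM : 0 ≤ M) (hD : 0 ≤ D) (hc : 0 < c)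
    (hc1 : c ≤ 1) (hJ : 1 ≤ J) (hct : c*t ≤ t - M)
    (hl : (2*t*J - 2*M)^2 ≤ r) (hu : r ≤ (2*t*J + 2*M + D)^2) :
    |r ^ (-(1:ℝ)/2) - (2*t*J)⁻¹| ≤ ((2*M+D)/c) * (t⁻¹ * t⁻¹ * (J^2)⁻¹) := by
  set m := 2*t*J with hm
  set L := 2*t*J - 2*M with hL
  set U := 2*t*J + 2*M + D with hU
  have hLpos : 0 < L := by nlinarith
  have hmpos : 0 < m := by positivity
  have hUpos : 0 < U := by nlinarith
  have hrpos : 0 < r := lt_of_lt_of_le (by positivity) hl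
  have h1 : r ^ (-(1:ℝ)/2) ≤ L⁻¹ := by
    have := rpow_half_anti 1 zero_le_one hLpos hl
    rwa [Real.rpow_neg_one] at this
  have h2 : U⁻¹ ≤ r ^ (-(1:ℝ)/2) := by
    have := rpow_half_anti' 1 zero_le_one hUpos hrpos hu
    rwa [Real.rpow_neg_one] at this
  have hLm : 2*c*t*J ≤ L := by nlinarith
  have hcore : |r ^ (-(1:ℝ)/2) - m⁻¹| ≤ (2*M+D) / (L*m) := by
    rw [abs_le]
    constructor
    · have e1 : m⁻¹ - U⁻¹ = (2*M+D)/(U*m) := by field_simp; ring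
      have e2 : (2*M+D)/(U*m) ≤ (2*M+D)/(L*m) := by
        apply div_le_div_of_nonneg_left (by linarith) (by positivity)
        nlinarith
      linarith
    · have e1 : L⁻¹ - m⁻¹ = (2*M)/(L*m) := by field_simp; ring
      have e2 : (2*M)/(L*m) ≤ (2*M+D)/(L*m) := by
        apply div_le_div_of_nonneg_right _ (by positivity)
        linarith
      linarith
  refine hcore.trans ?_
  rw [div_le_iff₀ (by positivity)]
  have expand : ((2*M+D)/c) * (t⁻¹ * t⁻¹ * (J^2)⁻¹) * ((2*c*t*J)*m) = 4*(2*M+D) := by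
    field_simp
    ring
  have : ((2*M+D)/c) * (t⁻¹ * t⁻¹ * (J^2)⁻¹) * ((2*c*t*J)*m) ≤
      ((2*M+D)/c) * (t⁻¹ * t⁻¹ * (J^2)⁻¹) * (L*m) := by
    apply mul_le_mul_of_nonneg_left _ (by positivity)
    apply mul_le_mul_of_nonneg_right hLm hmpos.le
  nlinarith [this, expand]

lemma reflSq_nonneg (n : ℕ) (t : ℝ) (j : ℤ) (p p' : StripPt n) : 0 ≤ reflSq n t j p p' := by
  unfold reflSq; positivity

lemma abs_neg_one_zpow_mul (j : ℤ) (b : ℝ) : |(-1:ℝ)^j * b| = |b| := by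
  have : |(-1:ℝ)^j| = 1 := by
    rcases Int.even_or_odd j with h | h
    · rw [h.neg_one_zpow]; simp
    · rw [Odd.neg_one_zpow h]; simp
  rw [abs_mul, this, one_mul]

lemma reflSq_bounds {n : ℕ} {t M D : ℝ} (ht : 0 < t) (j : ℤ)
    {p p' : StripPt n} (hp2 : |p.2| ≤ M) (hp'2 : |p'.2| ≤ M) (hpD : ‖p.1 - p'.1‖ ≤ D)
    (hpos : 0 ≤ 2*t*|(j:ℝ)| - 2*M) (hD : 0 ≤ D) :
    (2*t*|(j:ℝ)| - 2*M)^2 ≤ reflSq n t j p p' ∧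
      reflSq n t j p p' ≤ (2*t*|(j:ℝ)| + 2*M + D)^2 := by
  have hσ : |(-1:ℝ)^j * p'.2| = |p'.2| := abs_neg_one_zpow_mul j p'.2
  set d := p.2 - (2*t*(j:ℝ) + (-1:ℝ)^j * p'.2) with hd
  have h2 : |2*t*(j:ℝ)| = 2*t*|(j:ℝ)| := by
    rw [abs_mul, abs_of_nonneg (by linarith : (0:ℝ) ≤ 2*t)]
  have hlb : 2*t*|(j:ℝ)| - 2*M ≤ |d| := by
    have h1 : |2*t*(j:ℝ)| - |p.2 - (-1:ℝ)^j * p'.2| ≤ |2*t*(j:ℝ) - (p.2 - (-1:ℝ)^j * p'.2)| :=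
      abs_sub_abs_le_abs_sub _ _
    have h3 : |p.2 - (-1:ℝ)^j * p'.2| ≤ 2*M := by
      calc |p.2 - (-1:ℝ)^j * p'.2| ≤ |p.2| + |(-1:ℝ)^j * p'.2| := abs_sub _ _
      _ ≤ 2*M := by rw [hσ]; linarith
    have h4 : |2*t*(j:ℝ) - (p.2 - (-1:ℝ)^j * p'.2)| = |d| := by
      rw [hd, abs_sub_comm]; ring_nf
    linarith [h1, h2.symm.le, h4.le]
  have hub : |d| ≤ 2*t*|(j:ℝ)| + 2*M := by
    calc |d| = |(p.2 - (-1:ℝ)^j * p'.2) - 2*t*(j:ℝ)| := by rw [hd]; ring_nf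
    _ ≤ |p.2 - (-1:ℝ)^j * p'.2| + |2*t*(j:ℝ)| := abs_sub _ _
    _ ≤ (|p.2| + |(-1:ℝ)^j * p'.2|) + 2*t*|(j:ℝ)| := by
        rw [h2]; exact add_le_add (abs_sub _ _) le_rfl
    _ ≤ 2*t*|(j:ℝ)| + 2*M := by rw [hσ]; linarith
  have hdsq : d^2 = |d|^2 := (sq_abs d).symm
  constructor
  · have : (2*t*|(j:ℝ)| - 2*M)^2 ≤ |d|^2 := pow_le_pow_left₀ hpos hlb 2
    unfold reflSq
    rw [← hd]
    nlinarith [sq_nonneg ‖p.1 - p'.1‖]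
  · have h5 : |d|^2 ≤ (2*t*|(j:ℝ)| + 2*M)^2 := pow_le_pow_left₀ (abs_nonneg d) hub 2
    unfold reflSq
    rw [← hd]
    nlinarith [abs_nonneg (j:ℝ), abs_nonneg d, norm_nonneg (p.1 - p'.1),
      abs_nonneg p.2, hp2, mul_nonneg (mul_nonneg ht.le (abs_nonneg (j:ℝ))) hD]

/-- The master constant controlling `|H_t| ≤ CC·t⁻¹ + |log 4t|·t⁻¹`. -/
noncomputable def CC (q t₀ M D : ℝ) : ℝ :=
  (2*((t₀ - M)/t₀))^(-q) * t₀^(1-q) * (∑' j : {j : ℤ // j ≠ 0}, |((j : ℤ):ℝ)| ^ (-q)) +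
  ((2*M+D)/((t₀ - M)/t₀)) * t₀⁻¹ * (∑' j : {j : ℤ // j ≠ 0}, (((j : ℤ):ℝ)^2)⁻¹) +
  |Real.eulerMascheroniConstant|

lemma S1_nonneg (q : ℝ) : 0 ≤ ∑' j : {j : ℤ // j ≠ 0}, |((j : ℤ):ℝ)| ^ (-q) :=
  tsum_nonneg fun j => rpow_nonneg (abs_nonneg _) _

lemma S2_nonneg : 0 ≤ ∑' j : {j : ℤ // j ≠ 0}, (((j : ℤ):ℝ)^2)⁻¹ :=
  tsum_nonneg fun _ => by positivity

lemma CC_nonneg (q t₀ M D : ℝ) (ht₀ : 0 < t₀) (hM : 0 ≤ M) (hMt₀ : M < t₀) (hD : 0 ≤ D) :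
    0 ≤ CC q t₀ M D := by
  unfold CC
  have h1 := S1_nonneg q
  have h2 := S2_nonneg
  have hc : (0:ℝ) < (t₀ - M)/t₀ := div_pos (by linarith) ht₀
  have ha : (0:ℝ) ≤ (2*((t₀-M)/t₀))^(-q) := rpow_nonneg (by positivity) _
  have hb : (0:ℝ) ≤ t₀^(1-q) := rpow_nonneg ht₀.le _
  have hcm : (0:ℝ) ≤ (2*M+D)/((t₀-M)/t₀) := by positivity
  have hti : (0:ℝ) ≤ t₀⁻¹ := by positivity
  have A := mul_nonneg (mul_nonneg ha hb) h1
  have B := mul_nonneg (mul_nonneg hcm hti) h2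
  have C := abs_nonneg Real.eulerMascheroniConstant
  linarith

lemma HK_abs_le (n : ℕ) (q t t₀ M D : ℝ) (hq : 1 ≤ q) (ht₀ : 0 < t₀) (hM : 0 ≤ M)
    (hMt₀ : M < t₀) (hD : 0 ≤ D) (ht : t₀ ≤ t) (p p' : StripPt n)
    (hp2 : |p.2| ≤ M) (hp'2 : |p'.2| ≤ M) (hpD : ‖p.1 - p'.1‖ ≤ D) :
    |HK n q t p p'| ≤ CC q t₀ M D * t⁻¹ + |Real.log (4*t)| * t⁻¹ := by
  have ht' : 0 < t := lt_of_lt_of_le ht₀ ht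
  set c := (t₀ - M)/t₀ with hcdef
  have hc : 0 < c := by apply div_pos <;> linarith
  have hc1 : c ≤ 1 := by rw [hcdef, div_le_one ht₀]; linarith
  have hct : c * t ≤ t - M := by
    rw [hcdef, div_mul_eq_mul_div, div_le_iff₀ ht₀]; nlinarith
  have hJ : ∀ j : {j : ℤ // j ≠ 0}, 1 ≤ |((j : ℤ):ℝ)| := by
    intro j
    rw [← Int.cast_abs]
    exact_mod_cast Int.one_le_abs j.2
  have hpos : ∀ j : {j : ℤ // j ≠ 0}, 0 ≤ 2*t*|((j : ℤ):ℝ)| - 2*M := by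
    intro j
    have := hJ j
    nlinarith
  have hB : ∀ j : {j : ℤ // j ≠ 0},
      (2*t*|((j : ℤ):ℝ)| - 2*M)^2 ≤ reflSq n t j p p' ∧
        reflSq n t j p p' ≤ (2*t*|((j : ℤ):ℝ)| + 2*M + D)^2 :=
    fun j => reflSq_bounds ht' j hp2 hp'2 hpD (hpos j) hD
  rcases hq.lt_or_eq with h1 | h1
  · -- q > 1
    rw [HK, if_pos h1]
    have hterm : ∀ j : {j : ℤ // j ≠ 0},
        (reflSq n t j p p') ^ (-q/2) ≤ (2*c*t)^(-q) * |((j : ℤ):ℝ)|^(-q) :=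
      fun j => qgt_term_bound ht' hM hc (hJ j) hct (by linarith) (hB j).1
    have hf0 : ∀ j : {j : ℤ // j ≠ 0}, 0 ≤ (reflSq n t j p p') ^ (-q/2) :=
      fun j => rpow_nonneg (reflSq_nonneg n t j p p') _
    have hgsum : Summable (fun j : {j : ℤ // j ≠ 0} => (2*c*t)^(-q) * |((j : ℤ):ℝ)|^(-q)) := by
      have h := (Real.summable_abs_int_rpow h1).mul_left ((2*c*t)^(-q))
      exact h.subtype {j : ℤ | j ≠ 0}
    have hfsum : Summable (fun j : {j : ℤ // j ≠ 0} => (reflSq n t j p p') ^ (-q/2)) :=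
      Summable.of_nonneg_of_le hf0 hterm hgsum
    rw [abs_of_nonneg (tsum_nonneg hf0)]
    have step1 : (∑' j : {j : ℤ // j ≠ 0}, (reflSq n t j p p') ^ (-q/2)) ≤
        (2*c*t)^(-q) * (∑' j : {j : ℤ // j ≠ 0}, |((j : ℤ):ℝ)|^(-q)) := by
      rw [← tsum_mul_left]
      exact hfsum.tsum_le_tsum hterm hgsum
    have hsplit : (2*c*t)^(-q) = (2*c)^(-q) * (t^(1-q) * t⁻¹) := by
      rw [Real.mul_rpow (by positivity) ht'.le]
      congr 1
      rw [← Real.rpow_neg_one t, ← Real.rpow_add ht']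
      congr 1
      ring
    have hts : t^(1-q) ≤ t₀^(1-q) :=
      Real.rpow_le_rpow_of_nonpos ht₀ ht (by linarith)
    have hS1 := S1_nonneg q
    have step2 : (2*c*t)^(-q) * (∑' j : {j : ℤ // j ≠ 0}, |((j : ℤ):ℝ)|^(-q)) ≤
        ((2*c)^(-q) * t₀^(1-q) * (∑' j : {j : ℤ // j ≠ 0}, |((j : ℤ):ℝ)|^(-q))) * t⁻¹ := by
      rw [hsplit]
      have h2c : (0:ℝ) ≤ (2*c)^(-q) := rpow_nonneg (by positivity) _
      have hti : (0:ℝ) ≤ t⁻¹ := by positivity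
      calc (2*c)^(-q) * (t^(1-q) * t⁻¹) * (∑' j : {j : ℤ // j ≠ 0}, |((j : ℤ):ℝ)|^(-q)) ≤
          (2*c)^(-q) * (t₀^(1-q) * t⁻¹) * (∑' j : {j : ℤ // j ≠ 0}, |((j : ℤ):ℝ)|^(-q)) := by
            apply mul_le_mul_of_nonneg_right _ hS1
            exact mul_le_mul_of_nonneg_left (mul_le_mul_of_nonneg_right hts hti) h2c
      _ = ((2*c)^(-q) * t₀^(1-q) * (∑' j : {j : ℤ // j ≠ 0}, |((j : ℤ):ℝ)|^(-q))) * t⁻¹ := by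
            ring
    have hrest : 0 ≤ ((2*M+D)/c) * t₀⁻¹ * (∑' j : {j : ℤ // j ≠ 0}, (((j : ℤ):ℝ)^2)⁻¹) := by
      have := S2_nonneg
      positivity
    have hγ : (0:ℝ) ≤ |Real.eulerMascheroniConstant| := abs_nonneg _
    have hCC : CC q t₀ M D * t⁻¹ =
        ((2*c)^(-q) * t₀^(1-q) * (∑' j : {j : ℤ // j ≠ 0}, |((j : ℤ):ℝ)|^(-q))) * t⁻¹ +
        (((2*M+D)/c) * t₀⁻¹ * (∑' j : {j : ℤ // j ≠ 0}, (((j : ℤ):ℝ)^2)⁻¹)) * t⁻¹ +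
        |Real.eulerMascheroniConstant| * t⁻¹ := by
      rw [CC, ← hcdef]; ring
    have hti : (0:ℝ) ≤ t⁻¹ := by positivity
    have hlog : (0:ℝ) ≤ |Real.log (4*t)| * t⁻¹ := by positivity
    nlinarith [mul_nonneg hrest hti, mul_nonneg hγ hti]
  · -- q = 1
    subst h1
    rw [HK, if_neg (lt_irrefl 1)]
    have hcast : ∀ j : {j : ℤ // j ≠ 0}, ((|(j : ℤ)| : ℤ) : ℝ) = |((j : ℤ):ℝ)| := by
      intro j; push_cast; ring
    have hterm : ∀ j : {j : ℤ // j ≠ 0},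
        |(reflSq n t j p p') ^ (-(1:ℝ)/2) - (2 * t * |(j : ℤ)|)⁻¹| ≤
          ((2*M+D)/c) * (t⁻¹ * t⁻¹ * ((((j : ℤ):ℝ))^2)⁻¹) := by
      intro j
      have h := q1_term_bound ht' hM hD hc hc1 (hJ j) hct (hB j).1 (hB j).2
      rw [sq_abs] at h
      rw [hcast j]
      exact h
    have hgsum : Summable (fun j : {j : ℤ // j ≠ 0} =>
        ((2*M+D)/c) * (t⁻¹ * t⁻¹ * ((((j : ℤ):ℝ))^2)⁻¹)) := by
      have h0 : Summable (fun j : ℤ => (((j:ℝ))^2)⁻¹) := by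
        have := (summable_one_div_int_pow (p := 2)).mpr one_lt_two
        simpa [one_div] using this
      have h := ((h0.mul_left (t⁻¹ * t⁻¹)).mul_left ((2*M+D)/c))
      exact h.subtype {j : ℤ | j ≠ 0}
    have hasum : Summable (fun j : {j : ℤ // j ≠ 0} =>
        (reflSq n t j p p') ^ (-(1:ℝ)/2) - (2 * t * |(j : ℤ)|)⁻¹) := by
      apply Summable.of_norm_bounded hgsum
      intro j
      rw [Real.norm_eq_abs]
      exact hterm j
    have habs_sum : Summable (fun j : {j : ℤ // j ≠ 0} =>
        |(reflSq n t j p p') ^ (-(1:ℝ)/2) - (2 * t * |(j : ℤ)|)⁻¹|) :=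
      Summable.of_nonneg_of_le (fun j => abs_nonneg _) hterm hgsum
    have hstep : |∑' j : {j : ℤ // j ≠ 0},
        ((reflSq n t j p p') ^ (-(1:ℝ)/2) - (2 * t * |(j : ℤ)|)⁻¹)| ≤
        (((2*M+D)/c) * (t⁻¹ * t⁻¹)) * (∑' j : {j : ℤ // j ≠ 0}, (((j : ℤ):ℝ)^2)⁻¹) := by
      have h1 : |∑' j : {j : ℤ // j ≠ 0},
          ((reflSq n t j p p') ^ (-(1:ℝ)/2) - (2 * t * |(j : ℤ)|)⁻¹)| ≤
          ∑' j : {j : ℤ // j ≠ 0},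
            |(reflSq n t j p p') ^ (-(1:ℝ)/2) - (2 * t * |(j : ℤ)|)⁻¹| := by
        have := norm_tsum_le_tsum_norm (f := fun j : {j : ℤ // j ≠ 0} =>
          (reflSq n t j p p') ^ (-(1:ℝ)/2) - (2 * t * |(j : ℤ)|)⁻¹) (by
            simpa [Real.norm_eq_abs] using habs_sum)
        simpa [Real.norm_eq_abs] using this
      have h2 : (∑' j : {j : ℤ // j ≠ 0},
          |(reflSq n t j p p') ^ (-(1:ℝ)/2) - (2 * t * |(j : ℤ)|)⁻¹|) ≤
          ∑' j : {j : ℤ // j ≠ 0}, ((2*M+D)/c) * (t⁻¹ * t⁻¹ * ((((j : ℤ):ℝ))^2)⁻¹) :=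
        habs_sum.tsum_le_tsum hterm hgsum
      have h3 : (∑' j : {j : ℤ // j ≠ 0}, ((2*M+D)/c) * (t⁻¹ * t⁻¹ * ((((j : ℤ):ℝ))^2)⁻¹)) =
          (((2*M+D)/c) * (t⁻¹ * t⁻¹)) * (∑' j : {j : ℤ // j ≠ 0}, (((j : ℤ):ℝ)^2)⁻¹) := by
        rw [← tsum_mul_left]
        exact tsum_congr fun j => by ring
      linarith
    have hγterm : |(Real.eulerMascheroniConstant - Real.log (4*t)) / t| ≤
        |Real.eulerMascheroniConstant| * t⁻¹ + |Real.log (4*t)| * t⁻¹ := by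
      rw [div_eq_mul_inv, abs_mul, abs_of_nonneg (by positivity : (0:ℝ) ≤ t⁻¹)]
      have := abs_sub Real.eulerMascheroniConstant (Real.log (4*t))
      nlinarith [inv_nonneg.mpr ht'.le]
    have hS2 := S2_nonneg
    have hfinal : (((2*M+D)/c) * (t⁻¹ * t⁻¹)) * (∑' j : {j : ℤ // j ≠ 0}, (((j : ℤ):ℝ)^2)⁻¹) ≤
        (((2*M+D)/c) * t₀⁻¹ * (∑' j : {j : ℤ // j ≠ 0}, (((j : ℤ):ℝ)^2)⁻¹)) * t⁻¹ := by
      have hti : t⁻¹ ≤ t₀⁻¹ := by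
        apply inv_anti₀ ht₀ ht
      have hMD : (0:ℝ) ≤ (2*M+D)/c := by positivity
      have h4 : (0:ℝ) ≤ t⁻¹ := by positivity
      nlinarith [mul_nonneg hMD hS2, mul_nonneg (mul_nonneg hMD h4) hS2]
    have hCC : CC 1 t₀ M D * t⁻¹ =
        ((2*c)^(-(1:ℝ)) * t₀^(1-(1:ℝ)) * (∑' j : {j : ℤ // j ≠ 0}, |((j : ℤ):ℝ)|^(-(1:ℝ)))) * t⁻¹ +
        (((2*M+D)/c) * t₀⁻¹ * (∑' j : {j : ℤ // j ≠ 0}, (((j : ℤ):ℝ)^2)⁻¹)) * t⁻¹ +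
        |Real.eulerMascheroniConstant| * t⁻¹ := by
      rw [CC, ← hcdef]; ring
    have hfirst : (0:ℝ) ≤ ((2*c)^(-(1:ℝ)) * t₀^(1-(1:ℝ)) *
        (∑' j : {j : ℤ // j ≠ 0}, |((j : ℤ):ℝ)|^(-(1:ℝ)))) * t⁻¹ := by
      have := S1_nonneg 1
      have h2c : (0:ℝ) ≤ (2*c)^(-(1:ℝ)) := rpow_nonneg (by positivity) _
      have h3 : (0:ℝ) ≤ t₀^(1-(1:ℝ)) := rpow_nonneg ht₀.le _
      positivity
    calc |(∑' j : {j : ℤ // j ≠ 0},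
        ((reflSq n t j p p') ^ (-(1:ℝ)/2) - (2 * t * |(j : ℤ)|)⁻¹)) +
        (Real.eulerMascheroniConstant - Real.log (4*t)) / t| ≤
        |∑' j : {j : ℤ // j ≠ 0},
          ((reflSq n t j p p') ^ (-(1:ℝ)/2) - (2 * t * |(j : ℤ)|)⁻¹)| +
        |(Real.eulerMascheroniConstant - Real.log (4*t)) / t| := abs_add_le _ _
    _ ≤ CC 1 t₀ M D * t⁻¹ + |Real.log (4*t)| * t⁻¹ := by
        rw [hCC]
        linarith

lemma loginv_bound {t₀ t : ℝ} (ht₀ : 0 < t₀) (ht : t₀ ≤ t) :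
    |Real.log (4*t)| * t⁻¹ ≤ 4 + (4*t₀^2)⁻¹ := by
  have ht' : 0 < t := lt_of_lt_of_le ht₀ ht
  have h4t : 0 < 4*t := by linarith
  rcases le_or_gt 1 (4*t) with h | h
  · have h0 : 0 ≤ Real.log (4*t) := Real.log_nonneg h
    rw [abs_of_nonneg h0]
    have h1 : Real.log (4*t) ≤ 4*t - 1 := Real.log_le_sub_one_of_pos h4t
    have h2 : Real.log (4*t) * t⁻¹ ≤ (4*t) * t⁻¹ := by
      apply mul_le_mul_of_nonneg_right (by linarith) (by positivity)
    rw [mul_inv_cancel_right₀ (ne_of_gt ht')] at h2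
    have : (0:ℝ) ≤ (4*t₀^2)⁻¹ := by positivity
    linarith
  · have h0 : Real.log (4*t) < 0 := Real.log_neg h4t h
    rw [abs_of_neg h0]
    have h1 : -Real.log (4*t) = Real.log ((4*t)⁻¹) := (Real.log_inv _).symm
    have h2 : Real.log ((4*t)⁻¹) ≤ (4*t)⁻¹ - 1 := Real.log_le_sub_one_of_pos (by positivity)
    have h4 : -Real.log (4*t) * t⁻¹ ≤ (4*t)⁻¹ * t⁻¹ := by
      rw [h1]
      apply mul_le_mul_of_nonneg_right (by linarith) (by positivity)
    have h5 : (4*t)⁻¹ * t⁻¹ = (4*t^2)⁻¹ := by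
      rw [← mul_inv]; ring_nf
    have h6 : (4*t^2)⁻¹ ≤ (4*t₀^2)⁻¹ := by
      apply inv_anti₀ (by positivity)
      nlinarith
    nlinarith

lemma phi_tendsto (A : ℝ) :
    Tendsto (fun t : ℝ => A * t⁻¹ + |Real.log (4*t)| * t⁻¹) atTop (𝓝 0) := by
  have h1 : Tendsto (fun t : ℝ => A * t⁻¹) atTop (𝓝 0) := by
    simpa using tendsto_inv_atTop_zero.const_mul A
  have h2 : Tendsto (fun t : ℝ => |Real.log (4*t)| * t⁻¹) atTop (𝓝 0) := by
    have hlog : Tendsto (fun t : ℝ => Real.log t / t) atTop (𝓝 0) := by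
      have := Real.tendsto_pow_log_div_mul_add_atTop 1 0 1 one_ne_zero
      simpa using this
    have hlog4 : Tendsto (fun t : ℝ => Real.log 4 * t⁻¹) atTop (𝓝 0) := by
      simpa using tendsto_inv_atTop_zero.const_mul (Real.log 4)
    have hsum : Tendsto (fun t : ℝ => Real.log 4 * t⁻¹ + Real.log t / t) atTop (𝓝 0) := by
      simpa using hlog4.add hlog
    apply hsum.congr'
    filter_upwards [eventually_ge_atTop (1:ℝ)] with t ht1
    have ht' : (0:ℝ) < t := by linarith
    have h4t : (1:ℝ) ≤ 4*t := by linarith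
    rw [abs_of_nonneg (Real.log_nonneg h4t),
      Real.log_mul (by norm_num) (ne_of_gt ht')]
    rw [div_eq_mul_inv]
    ring
  simpa using h1.add h2

lemma HK_contOn (n : ℕ) (q t t₀ M D : ℝ) (hq : 1 ≤ q) (ht₀ : 0 < t₀) (hM : 0 ≤ M)
    (hMt₀ : M < t₀) (hD : 0 ≤ D) (ht : t₀ ≤ t) {s : Set (StripPt n × StripPt n)}
    (hs : ∀ x ∈ s, |x.1.2| ≤ M ∧ |x.2.2| ≤ M ∧ ‖x.1.1 - x.2.1‖ ≤ D) :
    ContinuousOn (fun x : StripPt n × StripPt n => HK n q t x.1 x.2) s := by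
  have ht' : 0 < t := lt_of_lt_of_le ht₀ ht
  set c := (t₀ - M)/t₀ with hcdef
  have hc : 0 < c := by apply div_pos <;> linarith
  have hc1 : c ≤ 1 := by rw [hcdef, div_le_one ht₀]; linarith
  have hct : c * t ≤ t - M := by
    rw [hcdef, div_mul_eq_mul_div, div_le_iff₀ ht₀]; nlinarith
  have hJ : ∀ j : {j : ℤ // j ≠ 0}, 1 ≤ |((j : ℤ):ℝ)| := by
    intro j; rw [← Int.cast_abs]; exact_mod_cast Int.one_le_abs j.2
  have hpos : ∀ j : {j : ℤ // j ≠ 0}, 0 ≤ 2*t*|((j : ℤ):ℝ)| - 2*M := by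
    intro j; have := hJ j; nlinarith
  have hrc : ∀ j : ℤ, Continuous (fun x : StripPt n × StripPt n => reflSq n t j x.1 x.2) := by
    intro j
    unfold reflSq
    fun_prop
  have hB : ∀ (j : {j : ℤ // j ≠ 0}) (x : StripPt n × StripPt n), x ∈ s →
      (2*t*|((j : ℤ):ℝ)| - 2*M)^2 ≤ reflSq n t j x.1 x.2 ∧
        reflSq n t j x.1 x.2 ≤ (2*t*|((j : ℤ):ℝ)| + 2*M + D)^2 := by
    intro j x hx
    obtain ⟨h1, h2, h3⟩ := hs x hx
    exact reflSq_bounds ht' j h1 h2 h3 (hpos j) hD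
  have hrpos : ∀ (j : {j : ℤ // j ≠ 0}) (x : StripPt n × StripPt n), x ∈ s →
      0 < reflSq n t j x.1 x.2 := by
    intro j x hx
    have h1 := (hB j x hx).1
    have h2 : 0 < 2*t*|((j : ℤ):ℝ)| - 2*M := by have := hJ j; nlinarith
    calc (0:ℝ) < (2*t*|((j : ℤ):ℝ)| - 2*M)^2 := by positivity
    _ ≤ _ := h1
  rcases hq.lt_or_eq with h1 | h1
  · simp only [HK, if_pos h1]
    apply continuousOn_tsum
      (u := fun j : {j : ℤ // j ≠ 0} => (2*c*t)^(-q) * |((j : ℤ):ℝ)|^(-q))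
    · intro j
      exact ((hrc j).continuousOn).rpow_const (fun x hx => Or.inl (ne_of_gt (hrpos j x hx)))
    · have h := (Real.summable_abs_int_rpow h1).mul_left ((2*c*t)^(-q))
      exact h.subtype {j : ℤ | j ≠ 0}
    · intro j x hx
      rw [Real.norm_eq_abs, abs_of_nonneg (rpow_nonneg (reflSq_nonneg n t j x.1 x.2) _)]
      exact qgt_term_bound ht' hM hc (hJ j) hct (by linarith) (hB j x hx).1
  · subst h1
    simp only [HK, if_neg (lt_irrefl (1:ℝ))]
    apply ContinuousOn.add _ continuousOn_const
    apply continuousOn_tsum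
      (u := fun j : {j : ℤ // j ≠ 0} => ((2*M+D)/c) * (t⁻¹ * t⁻¹ * ((((j : ℤ):ℝ))^2)⁻¹))
    · intro j
      exact (((hrc j).continuousOn).rpow_const
        (fun x hx => Or.inl (ne_of_gt (hrpos j x hx)))).sub continuousOn_const
    · have h0 : Summable (fun j : ℤ => (((j:ℝ))^2)⁻¹) := by
        have := (summable_one_div_int_pow (p := 2)).mpr one_lt_two
        simpa [one_div] using this
      exact (((h0.mul_left (t⁻¹ * t⁻¹)).mul_left ((2*M+D)/c))).subtype {j : ℤ | j ≠ 0}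
    · intro j x hx
      rw [Real.norm_eq_abs]
      have h := q1_term_bound ht' hM hD hc hc1 (hJ j) hct (hB j x hx).1 (hB j x hx).2
      rw [sq_abs] at h
      have hcast : ((|(j : ℤ)| : ℤ) : ℝ) = |((j : ℤ):ℝ)| := by push_cast; ring
      rw [hcast]
      exact h

lemma integrable_aux {α : Type*} [MeasurableSpace α] [TopologicalSpace α]
    [OpensMeasurableSpace α] {ν : Measure α} [IsFiniteMeasure ν] {s : Set α} (hsc : IsClosed s)
    {f : α → ℝ} (hf : ContinuousOn f s) {C : ℝ} (hC : ∀ x ∈ s, |f x| ≤ C)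
    (hν : ν sᶜ = 0) : Integrable f ν := by
  have hmem : ∀ᵐ x ∂ν, x ∈ s := by
    rw [MeasureTheory.ae_iff]
    exact hν
  have h1 : AEStronglyMeasurable f ν := by
    have h := hf.aestronglyMeasurable hsc.measurableSet (μ := ν)
    rwa [Measure.restrict_eq_self_of_ae_mem hmem] at h
  refine ⟨h1, HasFiniteIntegral.of_bounded (C := C) ?_⟩
  filter_upwards [hmem] with x hx
  rw [Real.norm_eq_abs]
  exact hC x hx

lemma measEnergy_lt_top_iff {n : ℕ} {k : StripPt n → StripPt n → ℝ}
    {μ : Measure (StripPt n)} :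
    measEnergy n k μ < ⊤ ↔
      ((μ.prod μ) {p : StripPt n × StripPt n | p.1 = p.2} = 0 ∧
        Integrable (fun p : StripPt n × StripPt n => k p.1 p.2) (μ.prod μ)) := by
  unfold measEnergy
  split_ifs with h
  · simpa [h] using EReal.coe_lt_top _
  · simp [h]

lemma setEnergy_lt_iff {n : ℕ} {k : StripPt n → StripPt n → ℝ} {K : Set (StripPt n)}
    {x : EReal} :
    setEnergy n k K < x ↔
      ∃ μ : Measure (StripPt n), IsProbabilityMeasure μ ∧ μ Kᶜ = 0 ∧
        measEnergy n k μ < x := by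
  unfold setEnergy
  rw [iInf_lt_iff]
  constructor
  · rintro ⟨μ, hμ⟩
    rw [iInf_lt_iff] at hμ
    obtain ⟨h1, hμ⟩ := hμ
    rw [iInf_lt_iff] at hμ
    obtain ⟨h2, hμ⟩ := hμ
    exact ⟨μ, h1, h2, hμ⟩
  · rintro ⟨μ, h1, h2, h3⟩
    exact ⟨μ, by rw [iInf_lt_iff]; exact ⟨h1, by rw [iInf_lt_iff]; exact ⟨h2, h3⟩⟩⟩

lemma setEnergy_le {n : ℕ} {k : StripPt n → StripPt n → ℝ} {K : Set (StripPt n)}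
    {μ : Measure (StripPt n)} (hμ : IsProbabilityMeasure μ) (hμK : μ Kᶜ = 0) :
    setEnergy n k K ≤ measEnergy n k μ :=
  iInf_le_of_le μ (iInf_le_of_le hμ (iInf_le _ hμK))

/-- For `q ≥ 1` and compact `K ⊂ S(t₀)`: the remainder `H_t` is uniformly bounded on `K × K`
for `t ≥ t₀`, tends to `0` uniformly on `K × K` as `t → ∞`; consequently the strip energies
`E_K(t)`, `t ∈ [t₀,∞]`, are all simultaneously finite or infinite, and
`E_K(t) → V_q(K) = E_K(∞)` as `t → ∞`. -/
theorem stmt_15 (n : ℕ) (hn : 1 ≤ n) (q : ℝ) (hq : 1 ≤ q)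
    (K : Set (StripPt n)) (hK : IsCompact K) (hKne : K.Nonempty)
    (t₀ : ℝ) (ht₀ : 0 < t₀) (hKS : ∀ p ∈ K, |p.2| < t₀) :
    (∃ C : ℝ, ∀ t : ℝ, t₀ ≤ t → ∀ p ∈ K, ∀ p' ∈ K, |HK n q t p p'| ≤ C) ∧
      (∀ ε : ℝ, 0 < ε → ∃ T : ℝ, ∀ t : ℝ, T ≤ t → ∀ p ∈ K, ∀ p' ∈ K,
        |HK n q t p p'| ≤ ε) ∧
      (∀ t₁ t₂ : ℝ, t₀ ≤ t₁ → t₀ ≤ t₂ →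
        (setEnergy n (GK n q t₁) K < ⊤ ↔ setEnergy n (GK n q t₂) K < ⊤)) ∧
      (∀ t₁ : ℝ, t₀ ≤ t₁ →
        (setEnergy n (GK n q t₁) K < ⊤ ↔ setEnergy n (GinfK n q) K < ⊤)) ∧
      Tendsto (fun t : ℝ => setEnergy n (GK n q t) K) atTop
        (𝓝 (setEnergy n (GinfK n q) K)) := by
  classical
  obtain ⟨pM, hpMK, hpMmax⟩ := hK.exists_isMaxOn hKne
    ((continuous_abs.comp continuous_snd).continuousOn)
  obtain ⟨pR, hpRK, hpRmax⟩ := hK.exists_isMaxOn hKne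
    ((continuous_norm.comp continuous_fst).continuousOn)
  set M := |pM.2| with hMdef
  set R := ‖pR.1‖ with hRdef
  set D := 2*R with hDdef
  have hM : 0 ≤ M := abs_nonneg _
  have hR : 0 ≤ R := norm_nonneg _
  have hD : 0 ≤ D := by rw [hDdef]; linarith
  have hMt₀ : M < t₀ := hKS pM hpMK
  set W : Set (StripPt n) := {p | ‖p.1‖ ≤ R} ∩ {p | |p.2| ≤ M} with hWdef
  have hKW : K ⊆ W := fun p hp => ⟨hpRmax hp, hpMmax hp⟩
  have hWc : IsClosed W :=
    (isClosed_le (continuous_norm.comp continuous_fst) continuous_const).inter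
      (isClosed_le (continuous_abs.comp continuous_snd) continuous_const)
  have hsW : ∀ x : StripPt n × StripPt n, x ∈ W ×ˢ W →
      |x.1.2| ≤ M ∧ |x.2.2| ≤ M ∧ ‖x.1.1 - x.2.1‖ ≤ D := by
    rintro x ⟨⟨ha1, ha2⟩, hb1, hb2⟩
    refine ⟨ha2, hb2, ?_⟩
    calc ‖x.1.1 - x.2.1‖ ≤ ‖x.1.1‖ + ‖x.2.1‖ := norm_sub_le _ _
    _ ≤ R + R := add_le_add ha1 hb1
    _ = D := by rw [hDdef]; ring
  have hCC : 0 ≤ CC q t₀ M D := CC_nonneg q t₀ M D ht₀ hM hMt₀ hD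
  have hmaster : ∀ t : ℝ, t₀ ≤ t → ∀ x : StripPt n × StripPt n, x ∈ W ×ˢ W →
      |HK n q t x.1 x.2| ≤ CC q t₀ M D * t⁻¹ + |Real.log (4*t)| * t⁻¹ := by
    intro t ht x hx
    obtain ⟨h1, h2, h3⟩ := hsW x hx
    exact HK_abs_le n q t t₀ M D hq ht₀ hM hMt₀ hD ht x.1 x.2 h1 h2 h3
  set Cb := CC q t₀ M D * t₀⁻¹ + (4 + (4*t₀^2)⁻¹) with hCbdef
  have hboundC : ∀ t : ℝ, t₀ ≤ t → ∀ x ∈ W ×ˢ W, |HK n q t x.1 x.2| ≤ Cb := by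
    intro t ht x hx
    have h1 := hmaster t ht x hx
    have h2 := loginv_bound ht₀ ht
    have ht' : 0 < t := lt_of_lt_of_le ht₀ ht
    have h3 : t⁻¹ ≤ t₀⁻¹ := inv_anti₀ ht₀ ht
    have h4 : CC q t₀ M D * t⁻¹ ≤ CC q t₀ M D * t₀⁻¹ := mul_le_mul_of_nonneg_left h3 hCC
    rw [hCbdef]; linarith
  -- null sets and integrability
  have hν : ∀ μ : Measure (StripPt n), IsProbabilityMeasure μ → μ Kᶜ = 0 →
      (μ.prod μ) (W ×ˢ W)ᶜ = 0 := by
    intro μ hμ hμK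
    haveI := hμ
    refine measure_mono_null (t := (Kᶜ ×ˢ Set.univ) ∪ (Set.univ ×ˢ Kᶜ)) ?_ ?_
    · intro x hx
      simp only [Set.mem_compl_iff, Set.mem_prod, not_and_or] at hx
      rcases hx with hx | hx
      · exact Or.inl ⟨fun hKm => hx (hKW hKm), Set.mem_univ _⟩
      · exact Or.inr ⟨Set.mem_univ _, fun hKm => hx (hKW hKm)⟩
    · apply measure_union_null
      · rw [Measure.prod_prod, hμK, zero_mul]
      · rw [Measure.prod_prod, hμK, mul_zero]
  have hHKint : ∀ t : ℝ, t₀ ≤ t → ∀ μ : Measure (StripPt n), IsProbabilityMeasure μ →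
      μ Kᶜ = 0 →
      Integrable (fun x : StripPt n × StripPt n => HK n q t x.1 x.2) (μ.prod μ) := by
    intro t ht μ hμ hμK
    haveI := hμ
    exact integrable_aux (hWc.prod hWc)
      (HK_contOn n q t t₀ M D hq ht₀ hM hMt₀ hD ht hsW)
      (fun x hx => hboundC t ht x hx) (hν μ hμ hμK)
  have hint_iff : ∀ t : ℝ, t₀ ≤ t → ∀ μ : Measure (StripPt n), IsProbabilityMeasure μ →
      μ Kᶜ = 0 →
      (Integrable (fun x : StripPt n × StripPt n => GK n q t x.1 x.2) (μ.prod μ) ↔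
        Integrable (fun x : StripPt n × StripPt n => GinfK n q x.1 x.2) (μ.prod μ)) := by
    intro t ht μ hμ hμK
    have hHKi := hHKint t ht μ hμ hμK
    constructor
    · intro h
      have heq : (fun x : StripPt n × StripPt n => GinfK n q x.1 x.2)
          = (fun x : StripPt n × StripPt n => GK n q t x.1 x.2)
            - (fun x : StripPt n × StripPt n => HK n q t x.1 x.2) := by
        funext x; simp [GK]
      rw [heq]
      exact h.sub hHKi
    · intro h
      have heq : (fun x : StripPt n × StripPt n => GK n q t x.1 x.2)
          = (fun x : StripPt n × StripPt n => GinfK n q x.1 x.2)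
            + (fun x : StripPt n × StripPt n => HK n q t x.1 x.2) := by
        funext x; simp [GK]
      rw [heq]
      exact h.add hHKi
  have hmeas_iff : ∀ t : ℝ, t₀ ≤ t → ∀ μ : Measure (StripPt n), IsProbabilityMeasure μ →
      μ Kᶜ = 0 →
      (measEnergy n (GK n q t) μ < ⊤ ↔ measEnergy n (GinfK n q) μ < ⊤) := by
    intro t ht μ hμ hμK
    rw [measEnergy_lt_top_iff, measEnergy_lt_top_iff]
    exact and_congr Iff.rfl (hint_iff t ht μ hμ hμK)
  have hE_iff : ∀ t : ℝ, t₀ ≤ t →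
      (setEnergy n (GK n q t) K < ⊤ ↔ setEnergy n (GinfK n q) K < ⊤) := by
    intro t ht
    rw [setEnergy_lt_iff, setEnergy_lt_iff]
    constructor
    · rintro ⟨μ, h1, h2, h3⟩
      exact ⟨μ, h1, h2, (hmeas_iff t ht μ h1 h2).mp h3⟩
    · rintro ⟨μ, h1, h2, h3⟩
      exact ⟨μ, h1, h2, (hmeas_iff t ht μ h1 h2).mpr h3⟩
  -- the integral bound on H
  have hHKint_bd : ∀ t : ℝ, t₀ ≤ t → ∀ μ : Measure (StripPt n), IsProbabilityMeasure μ →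
      μ Kᶜ = 0 →
      |∫ x : StripPt n × StripPt n, HK n q t x.1 x.2 ∂(μ.prod μ)| ≤
        CC q t₀ M D * t⁻¹ + |Real.log (4*t)| * t⁻¹ := by
    intro t ht μ hμ hμK
    haveI := hμ
    have hae : ∀ᵐ x ∂(μ.prod μ), ‖HK n q t x.1 x.2‖ ≤
        CC q t₀ M D * t⁻¹ + |Real.log (4*t)| * t⁻¹ := by
      have hmem : ∀ᵐ x ∂(μ.prod μ), x ∈ W ×ˢ W := by
        rw [MeasureTheory.ae_iff]
        exact hν μ hμ hμK
      filter_upwards [hmem] with x hx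
      rw [Real.norm_eq_abs]
      exact hmaster t ht x hx
    have h := norm_integral_le_of_norm_le_const hae
    rw [Real.norm_eq_abs] at h
    simpa using h
  refine ⟨⟨Cb, fun t ht p hp p' hp' => hboundC t ht (p, p') ⟨hKW hp, hKW hp'⟩⟩, ?_, ?_, ?_, ?_⟩
  · -- uniform convergence
    intro ε hε
    obtain ⟨T0, hT0⟩ := (Metric.tendsto_atTop.mp (phi_tendsto (CC q t₀ M D))) ε hε
    refine ⟨max T0 t₀, fun t ht p hp p' hp' => ?_⟩
    have h1 := hmaster t (le_trans (le_max_right _ _) ht) (p, p') ⟨hKW hp, hKW hp'⟩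
    have h2 := hT0 t (le_trans (le_max_left _ _) ht)
    rw [Real.dist_eq, sub_zero] at h2
    calc |HK n q t p p'| ≤ CC q t₀ M D * t⁻¹ + |Real.log (4*t)| * t⁻¹ := h1
    _ ≤ |CC q t₀ M D * t⁻¹ + |Real.log (4*t)| * t⁻¹| := le_abs_self _
    _ ≤ ε := le_of_lt h2
  · exact fun t₁ t₂ h1 h2 => (hE_iff t₁ h1).trans (hE_iff t₂ h2).symm
  · exact hE_iff
  · -- the limit
    have hGnn : ∀ (p p' : StripPt n), 0 ≤ GinfK n q p p' := by
      intro p p'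
      unfold GinfK
      exact rpow_nonneg (by positivity) _
    have hEnn : (0:EReal) ≤ setEnergy n (GinfK n q) K := by
      refine le_iInf fun μ => le_iInf fun hμ => le_iInf fun hμK => ?_
      unfold measEnergy
      split_ifs with h
      · exact EReal.coe_nonneg.mpr (integral_nonneg fun x => hGnn x.1 x.2)
      · exact le_top
    rcases eq_top_or_lt_top (setEnergy n (GinfK n q) K) with htop | hlt
    · rw [htop]
      apply Tendsto.congr' _ (tendsto_const_nhds (x := (⊤:EReal)))
      filter_upwards [eventually_ge_atTop t₀] with t ht
      have hiff := hE_iff t ht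
      rw [htop] at hiff
      have h2 : ¬ setEnergy n (GK n q t) K < ⊤ := fun hc => absurd (hiff.mp hc) (lt_irrefl ⊤)
      exact (top_le_iff.mp (not_lt.mp h2)).symm
    · have hne_top : setEnergy n (GinfK n q) K ≠ ⊤ := hlt.ne
      have hne_bot : setEnergy n (GinfK n q) K ≠ ⊥ := by
        intro h
        rw [h] at hEnn
        exact absurd hEnn (by simp)
      set a := (setEnergy n (GinfK n q) K).toReal with hadef
      have hcoe : (a : EReal) = setEnergy n (GinfK n q) K := EReal.coe_toReal hne_top hne_bot
      set φ := fun t : ℝ => CC q t₀ M D * t⁻¹ + |Real.log (4*t)| * t⁻¹ with hφdef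
      have hlb : ∀ t : ℝ, t₀ ≤ t →
          ((a - φ t : ℝ) : EReal) ≤ setEnergy n (GK n q t) K := by
        intro t ht
        refine le_iInf fun μ => le_iInf fun hμ => le_iInf fun hμK => ?_
        haveI := hμ
        unfold measEnergy
        split_ifs with h
        · obtain ⟨hdiag, hGKi⟩ := h
          have hHKi := hHKint t ht μ hμ hμK
          have hGinfi : Integrable
              (fun x : StripPt n × StripPt n => GinfK n q x.1 x.2) (μ.prod μ) :=
            (hint_iff t ht μ hμ hμK).mp hGKi
          have hmG : measEnergy n (GinfK n q) μ =
              ((∫ x : StripPt n × StripPt n, GinfK n q x.1 x.2 ∂(μ.prod μ) : ℝ) : EReal) :=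
            if_pos ⟨hdiag, hGinfi⟩
          have h1 : (a : EReal) ≤ measEnergy n (GinfK n q) μ := by
            rw [hcoe]
            exact setEnergy_le hμ hμK
          rw [hmG] at h1
          have h1' : a ≤ ∫ x : StripPt n × StripPt n, GinfK n q x.1 x.2 ∂(μ.prod μ) :=
            EReal.coe_le_coe_iff.mp h1
          have h2 := hHKint_bd t ht μ hμ hμK
          have h3 : ∫ x : StripPt n × StripPt n, GK n q t x.1 x.2 ∂(μ.prod μ) =
              (∫ x : StripPt n × StripPt n, GinfK n q x.1 x.2 ∂(μ.prod μ)) +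
              ∫ x : StripPt n × StripPt n, HK n q t x.1 x.2 ∂(μ.prod μ) := by
            rw [show (fun x : StripPt n × StripPt n => GK n q t x.1 x.2) =
              fun x : StripPt n × StripPt n => GinfK n q x.1 x.2 + HK n q t x.1 x.2 from rfl]
            exact integral_add hGinfi hHKi
          apply EReal.coe_le_coe_iff.mpr
          rw [h3]
          have h4 := abs_le.mp h2
          have hφeq : φ t = CC q t₀ M D * t⁻¹ + |Real.log (4*t)| * t⁻¹ := rfl
          rw [hφeq]
          linarith [h4.1]
        · exact le_top
      have hub : ∀ t : ℝ, t₀ ≤ t →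
          setEnergy n (GK n q t) K ≤ ((a + φ t : ℝ) : EReal) := by
        intro t ht
        by_contra hcon
        push_neg at hcon
        obtain ⟨b, hb1, hb2⟩ := EReal.lt_iff_exists_real_btwn.mp hcon
        have hb1' : a + φ t < b := EReal.coe_lt_coe_iff.mp hb1
        have hsmall : setEnergy n (GinfK n q) K < ((b - φ t : ℝ) : EReal) := by
          rw [← hcoe]
          exact EReal.coe_lt_coe_iff.mpr (by linarith)
        obtain ⟨μ, hμ, hμK, hm⟩ := setEnergy_lt_iff.mp hsmall
        haveI := hμ
        have hmlt : measEnergy n (GinfK n q) μ < ⊤ := lt_trans hm (EReal.coe_lt_top _)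
        obtain ⟨hdiag, hGinfi⟩ := measEnergy_lt_top_iff.mp hmlt
        have hHKi := hHKint t ht μ hμ hμK
        have hGKi : Integrable
            (fun x : StripPt n × StripPt n => GK n q t x.1 x.2) (μ.prod μ) :=
          (hint_iff t ht μ hμ hμK).mpr hGinfi
        have hmG : measEnergy n (GinfK n q) μ =
            ((∫ x : StripPt n × StripPt n, GinfK n q x.1 x.2 ∂(μ.prod μ) : ℝ) : EReal) :=
          if_pos ⟨hdiag, hGinfi⟩
        rw [hmG] at hm
        have hGlt : (∫ x : StripPt n × StripPt n, GinfK n q x.1 x.2 ∂(μ.prod μ)) < b - φ t :=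
          EReal.coe_lt_coe_iff.mp hm
        have h2 := hHKint_bd t ht μ hμ hμK
        have hmGK : measEnergy n (GK n q t) μ =
            ((∫ x : StripPt n × StripPt n, GK n q t x.1 x.2 ∂(μ.prod μ) : ℝ) : EReal) :=
          if_pos ⟨hdiag, hGKi⟩
        have h3 : ∫ x : StripPt n × StripPt n, GK n q t x.1 x.2 ∂(μ.prod μ) =
            (∫ x : StripPt n × StripPt n, GinfK n q x.1 x.2 ∂(μ.prod μ)) +
            ∫ x : StripPt n × StripPt n, HK n q t x.1 x.2 ∂(μ.prod μ) := by
          rw [show (fun x : StripPt n × StripPt n => GK n q t x.1 x.2) =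
            fun x : StripPt n × StripPt n => GinfK n q x.1 x.2 + HK n q t x.1 x.2 from rfl]
          exact integral_add hGinfi hHKi
        have hchain : setEnergy n (GK n q t) K ≤ (b : EReal) := by
          refine le_trans (setEnergy_le hμ hμK) ?_
          rw [hmGK, h3]
          apply EReal.coe_le_coe_iff.mpr
          have h4 := abs_le.mp h2
          have hφeq : φ t = CC q t₀ M D * t⁻¹ + |Real.log (4*t)| * t⁻¹ := rfl
          have h5 : (∫ x : StripPt n × StripPt n, HK n q t x.1 x.2 ∂(μ.prod μ)) ≤ φ t := by
            rw [hφeq]; exact h4.2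
          linarith [hGlt, h5]
        exact absurd (lt_of_le_of_lt hchain hb2) (lt_irrefl _)
      rw [← hcoe]
      have hφt : Tendsto φ atTop (𝓝 0) := phi_tendsto (CC q t₀ M D)
      apply tendsto_of_tendsto_of_tendsto_of_le_of_le'
        (g := fun t : ℝ => ((a - φ t : ℝ) : EReal))
        (h := fun t : ℝ => ((a + φ t : ℝ) : EReal))
      · exact EReal.tendsto_coe.mpr (by simpa using tendsto_const_nhds.sub hφt)
      · exact EReal.tendsto_coe.mpr (by simpa using tendsto_const_nhds.add hφt)
      · filter_upwards [eventually_ge_atTop t₀] with t ht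
        exact hlb t ht
      · filter_upwards [eventually_ge_atTop t₀] with t ht
        exact hub t ht
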